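/- Let S be a connected colorful graph and let e, e' ∈ E(S) be any two edges. Then there is a color-preserving isomorphism between the CFI graphs Γ(S, χ_e) and Γ(S, χ_{e'}). -/

import Mathlib

open SimpleGraph

variable {V : Type} [Fintype V] [DecidableEq V]

/-- Vertices of the CFI graph over a colorful graph `S`: pairs of a color `v ∈ V(S)`
and an even assignment on the edges incident to `v` (encoded as a function on all of
`Sym2 V` supported on the incidence set of `v`). -/
def CFIVert (S : SimpleGraph V) : Type :=
  Σ v : V, {a : Sym2 V → ZMod 2 //
    (∀ e, a e ≠ 0 → e ∈ S.incidenceSet v) ∧ ∑ e : Sym2 V, a e = 0}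

/-- The CFI graph of a colorful graph `S` with charge function `c`: vertices
`(u, a_u)` and `(v, a_v)` are adjacent iff `uv ∈ E(S)` and
`a_u(uv) + a_v(uv) = c(uv)`.  Its coloring is `Sigma.fst : CFIVert S → V`. -/
def CFI (S : SimpleGraph V) (c : Sym2 V → ZMod 2) : SimpleGraph (CFIVert S) where
  Adj x y := S.Adj x.1 y.1 ∧ x.2.1 s(x.1, y.1) + y.2.1 s(x.1, y.1) = c s(x.1, y.1)
  symm := ⟨by
    rintro ⟨u, a⟩ ⟨v, b⟩ ⟨hadj, hsum⟩
    refine ⟨hadj.symm, ?_⟩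
    simp only [Sym2.eq_swap (a := v) (b := u)]
    rw [add_comm]; exact hsum⟩
  loopless := ⟨fun x h => S.loopless.1 _ h.1⟩

/-- The twist function added at color `b`: flips the values at edges `e` and `g`. -/
def CFIdelta (b : V) (e g : Sym2 V) : V → Sym2 V → ZMod 2 :=
  fun v f => if v = b then ((if f = e then 1 else 0) + (if f = g then 1 else 0)) else 0

lemma CFIdelta_self (b : V) (e g : Sym2 V) (v : V) (f : Sym2 V) :
    CFIdelta b e g v f + CFIdelta b e g v f = 0 := by
  generalize CFIdelta b e g v f = x
  revert x; decide

/-- The vertex map of the elementary twist: an element of `CFIVert S`. -/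
def CFItwist (S : SimpleGraph V) (b : V) (e g : Sym2 V)
    (he : e ∈ S.edgeSet) (hg : g ∈ S.edgeSet) (hbe : b ∈ e) (hbg : b ∈ g) :
    CFIVert S → CFIVert S := fun x =>
  ⟨x.1, ⟨fun f => x.2.1 f + CFIdelta b e g x.1 f, by
    constructor
    · intro f hf
      by_cases hx : x.2.1 f = 0
      · rcases x with ⟨v, a, ha⟩
        simp only [hx, zero_add] at hf
        unfold CFIdelta at hf
        by_cases hvb : v = b
        · subst hvb
          simp only [if_pos rfl] at hf
          by_cases hfe : f = e
        
          · subst hfe; exact ⟨he, hbe⟩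
          · by_cases hfg : f = g
            · subst hfg; exact ⟨hg, hbg⟩
            · simp [hfe, hfg] at hf
              exact absurd hx hf
        · simp [hvb] at hf
          exact absurd hx hf
      · exact x.2.2.1 f hx
    · rw [Finset.sum_add_distrib, x.2.2.2, zero_add]
      unfold CFIdelta
      by_cases hvb : x.1 = b
      · simp only [hvb, if_pos rfl, Finset.sum_add_distrib,
          Finset.sum_ite_eq' Finset.univ, Finset.mem_univ, if_pos]
        decide
      · simp [hvb]⟩⟩

lemma CFItwist_invol (S : SimpleGraph V) (b : V) (e g : Sym2 V)
    (he : e ∈ S.edgeSet) (hg : g ∈ S.edgeSet) (hbe : b ∈ e) (hbg : b ∈ g) (x : CFIVert S) :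
    CFItwist S b e g he hg hbe hbg (CFItwist S b e g he hg hbe hbg x) = x := by
  rcases x with ⟨v, a, ha⟩
  refine Sigma.subtype_ext rfl ?_
  funext f
  show (a f + CFIdelta b e g v f) + CFIdelta b e g v f = a f
  rw [add_assoc, CFIdelta_self, add_zero]

/-- key arithmetic fact for adjacency preservation -/
lemma CFIdelta_edge (b : V) (e g : Sym2 V) (hbe : b ∈ e) (hbg : b ∈ g)
    (u v : V) (huv : u ≠ v) :
    CFIdelta b e g u s(u, v) + CFIdelta b e g v s(u, v)
      = (if s(u, v) = e then 1 else 0) + (if s(u, v) = g then 1 else 0) := by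
  unfold CFIdelta
  by_cases hub : u = b
  · subst hub
    have hvb : v ≠ u := fun h => huv h.symm
    simp [hvb]
  · by_cases hvb : v = b
    · subst hvb
      simp [hub]
    · have hne : s(u, v) ≠ e := fun h => hub (by
        have : b ∈ s(u, v) := h ▸ hbe
        rcases Sym2.mem_iff.mp this with h1 | h1
        · exact h1.symm
        · exact absurd h1.symm hvb)
      have hng : s(u, v) ≠ g := fun h => hub (by
        have : b ∈ s(u, v) := h ▸ hbg
        rcases Sym2.mem_iff.mp this with h1 | h1
        · exact h1.symm
        · exact absurd h1.symm hvb)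
      simp [hub, hvb, hne, hng]

lemma zmod2_helper : ∀ x y p q r s : ZMod 2, p + q = r + s →
    ((x + p) + (y + q) = s ↔ x + y = r) := by decide

lemma CFI_step (S : SimpleGraph V) [DecidableRel S.Adj] (b : V) (e g : Sym2 V)
    (he : e ∈ S.edgeSet) (hg : g ∈ S.edgeSet) (hbe : b ∈ e) (hbg : b ∈ g) :
    ∃ φ : CFI S (fun f => if f = e then 1 else 0) ≃g
        CFI S (fun f => if f = g then 1 else 0),
      ∀ x : CFIVert S, (φ x).1 = x.1 := by
  refine ⟨⟨⟨CFItwist S b e g he hg hbe hbg, CFItwist S b e g he hg hbe hbg,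
      CFItwist_invol S b e g he hg hbe hbg, CFItwist_invol S b e g he hg hbe hbg⟩, ?_⟩,
    fun x => rfl⟩
  intro x y
  show (S.Adj x.1 y.1 ∧
      (x.2.1 s(x.1, y.1) + CFIdelta b e g x.1 s(x.1, y.1)) +
        (y.2.1 s(x.1, y.1) + CFIdelta b e g y.1 s(x.1, y.1)) =
        (if s(x.1, y.1) = g then 1 else 0))
    ↔ (S.Adj x.1 y.1 ∧
      x.2.1 s(x.1, y.1) + y.2.1 s(x.1, y.1) = (if s(x.1, y.1) = e then 1 else 0))
  exact and_congr_right fun hadj =>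
    zmod2_helper _ _ _ _ _ _ (CFIdelta_edge b e g hbe hbg x.1 y.1 hadj.ne)

lemma CFI_walk (S : SimpleGraph V) [DecidableRel S.Adj] {b b' : V} (p : S.Walk b b') :
    ∀ (e e' : Sym2 V), e ∈ S.edgeSet → e' ∈ S.edgeSet → b ∈ e → b' ∈ e' →
    ∃ φ : CFI S (fun f => if f = e then 1 else 0) ≃g
        CFI S (fun f => if f = e' then 1 else 0),
      ∀ x : CFIVert S, (φ x).1 = x.1 := by
  induction p with
  | nil => exact fun e e' he he' hbe hbe' => CFI_step S _ e e' he he' hbe hbe'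
  | @cons u c w h q ih =>
    intro e e' he he' hbe hbe'
    obtain ⟨ψ, hψ⟩ := CFI_step S u e s(u, c) he (S.mem_edgeSet.mpr h) hbe
      (Sym2.mem_mk_left u c)
    obtain ⟨ψ', hψ'⟩ := ih s(u, c) e' (S.mem_edgeSet.mpr h) he'
      (Sym2.mem_mk_right u c) hbe'
    exact ⟨ψ.trans ψ', fun x => (hψ' (ψ x)).trans (hψ x)⟩


/-- For a connected colorful graph `S` and any two edges `e, e' ∈ E(S)`, the CFI
graphs `Γ(S, χ_e)` and `Γ(S, χ_{e'})` are color-isomorphic, via an isomorphism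
preserving the coloring `Sigma.fst`. -/
theorem CFI_iso_push_charge
    (S : SimpleGraph V) [DecidableRel S.Adj] (hconn : S.Connected)
    (e e' : Sym2 V) (he : e ∈ S.edgeSet) (he' : e' ∈ S.edgeSet) :
    ∃ φ : CFI S (fun f => if f = e then 1 else 0) ≃g
        CFI S (fun f => if f = e' then 1 else 0),
      ∀ x : CFIVert S, (φ x).1 = x.1 := by
  induction e using Sym2.ind with
  | _ a b =>
  induction e' using Sym2.ind with
  | _ a' b' =>
  obtain ⟨p⟩ := hconn.preconnected b a'
  exact CFI_walk S p s(a, b) s(a', b') he he' (Sym2.mem_mk_right a b)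
    (Sym2.mem_mk_left a' b')
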